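/- arXiv:1207.4924 — 3 statements merged into one kernel-verified Lean document; each statement's English description precedes it below -/
import Mathlib

section
/- Let Y be a separable metric space. Then any sequence of lower semicontinuous functions f_h : Y → [-∞,+∞] admits a Γ-convergent subsequence. -/
open Filter Topology

/-- Γ-convergence of a sequence of extended-real-valued functions on a metric space. -/
def GammaConvergesTo {Y : Type*} [MetricSpace Y] (f : ℕ → Y → EReal) (g : Y → EReal) : Prop :=
  (∀ y : Y, ∀ yh : ℕ → Y, Tendsto yh atTop (𝓝 y) →
      g y ≤ Filter.liminf (fun h => f h (yh h)) atTop) ∧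
  (∀ y : Y, ∃ yh : ℕ → Y, Tendsto yh atTop (𝓝 y) ∧
      Filter.limsup (fun h => f h (yh h)) atTop ≤ g y)

/-- On a separable metric space, any sequence of lower semicontinuous functions with values
in `[-∞,+∞]` admits a Γ-convergent subsequence. -/
theorem stmt1 {Y : Type*} [MetricSpace Y] [TopologicalSpace.SeparableSpace Y]
    (f : ℕ → Y → EReal) (hlsc : ∀ h, LowerSemicontinuous (f h)) :
    ∃ φ : ℕ → ℕ, StrictMono φ ∧ ∃ g : Y → EReal, LowerSemicontinuous g ∧
      GammaConvergesTo (fun k => f (φ k)) g := by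
  classical
  haveI : SecondCountableTopology Y := UniformSpace.secondCountable_of_separable Y
  by_cases hY : Nonempty Y
  · -- main case
    obtain ⟨B, hBc, -, hB⟩ := TopologicalSpace.exists_countable_basis Y
    obtain ⟨y₀⟩ := hY
    obtain ⟨v₀, hv₀B, -, -⟩ := hB.exists_subset_of_mem_open (Set.mem_univ y₀) isOpen_univ
    obtain ⟨u, hu⟩ := hBc.exists_eq_range ⟨v₀, hv₀B⟩
    have uopen : ∀ n, IsOpen (u n) := fun n => hB.isOpen (hu ▸ Set.mem_range_self n)
    -- infima over basic sets
    set a : ℕ → ℕ → EReal := fun n h => ⨅ z : u n, f h z with ha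
    -- extract a subsequence along which all these infima converge
    obtain ⟨L, φ, hφ, hconv⟩ := CompactSpace.tendsto_subseq (X := ℕ → EReal)
      (fun h => fun n => a n h)
    have hconvn : ∀ n, Tendsto (fun k => a n (φ k)) atTop (𝓝 (L n)) := by
      intro n
      exact (tendsto_pi_nhds.mp hconv) n
    refine ⟨φ, hφ, fun y => ⨆ n, ⨆ _ : y ∈ u n, L n, ?_, ?_, ?_⟩
    · -- lower semicontinuity of g
      intro y c hc
      simp only [gt_iff_lt] at hc
      rw [lt_iSup_iff] at hc
      obtain ⟨n, hn⟩ := hc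
      rw [lt_iSup_iff] at hn
      obtain ⟨hyn, hcL⟩ := hn
      filter_upwards [(uopen n).mem_nhds hyn] with z hz
      exact hcL.trans_le (le_iSup₂ (f := fun n (_ : z ∈ u n) => L n) n hz)
    · -- liminf inequality
      intro y yh hyh
      refine iSup₂_le fun n hyn => ?_
      rw [← (hconvn n).liminf_eq]
      refine liminf_le_liminf ?_
      filter_upwards [hyh ((uopen n).mem_nhds hyn)] with k hk
      exact iInf_le (fun z : u n => f (φ k) z) ⟨yh k, hk⟩
    · -- recovery sequences
      intro y
      set g : Y → EReal := fun y => ⨆ n, ⨆ _ : y ∈ u n, L n with hg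
      by_cases hgy : g y = ⊤
      · exact ⟨fun _ => y, tendsto_const_nhds, by simp [hgy]⟩
      · have hgy' : g y < ⊤ := lt_top_iff_ne_top.mpr hgy
        obtain ⟨c, hc_anti, hc_mem, hc_tendsto⟩ := exists_seq_strictAnti_tendsto' hgy'
        -- pick basic neighborhoods shrinking to y
        have hball : ∀ m : ℕ, ∃ n, y ∈ u n ∧ u n ⊆ Metric.ball y (1 / (m + 1)) := by
          intro m
          have hpos : (0 : ℝ) < 1 / (m + 1) := by positivity
          obtain ⟨v, hvB, hyv, hvs⟩ := hB.exists_subset_of_mem_open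
            (Metric.mem_ball_self hpos) Metric.isOpen_ball
          obtain ⟨n, rfl⟩ := hu ▸ hvB
          exact ⟨n, hyv, hvs⟩
        choose nn hynn hnnsub using hball
        have hLle : ∀ m, L (nn m) ≤ g y := fun m =>
          le_iSup₂ (f := fun n (_ : y ∈ u n) => L n) (nn m) (hynn m)
        -- for each m, the infima eventually drop below c m
        have hNm : ∀ m, ∃ N, ∀ k ≥ N, a (nn m) (φ k) < c m := by
          intro m
          have := (hconvn (nn m)).eventually_lt_const ((hLle m).trans_lt (hc_mem m).1)
          exact eventually_atTop.mp this
        choose N hN using hNm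
        set K : ℕ → ℕ := fun m => m + (Finset.range (m + 1)).sup N with hK
        have hKm : ∀ m, m ≤ K m := fun m => Nat.le_add_right _ _
        have hKN : ∀ m, N m ≤ K m := fun m =>
          le_trans (Finset.le_sup (Finset.mem_range.mpr (Nat.lt_succ_self m)))
            (Nat.le_add_left _ _)
        have hKmono : Monotone K := by
          intro i j hij
          exact Nat.add_le_add hij (Finset.sup_mono (Finset.range_subset_range.mpr (by omega)))
        set M : ℕ → ℕ := fun k => Nat.findGreatest (fun m => K m ≤ k) k with hM
        have hjM : ∀ j k, K j ≤ k → j ≤ M k := fun j k h =>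
          Nat.le_findGreatest ((hKm j).trans h) h
        have hPM : ∀ k, K 0 ≤ k → K (M k) ≤ k := fun k hk =>
          Nat.findGreatest_spec (P := fun m => K m ≤ k) (m := 0) (Nat.zero_le k) hk
        -- the condition allowing to pick a near-minimizer
        set P : ℕ → Prop := fun k => a (nn (M k)) (φ k) < c (M k) with hP
        have hPholds : ∀ k, K 0 ≤ k → P k := by
          intro k hk
          exact hN (M k) k (le_trans (hKN (M k)) (hPM k hk))
        set yh : ℕ → Y := fun k =>
          if hk : P k then (Classical.choose (iInf_lt_iff.mp hk) : u (nn (M k))).1 else y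
          with hyh
        have hyhspec : ∀ k, P k → yh k ∈ u (nn (M k)) ∧ f (φ k) (yh k) < c (M k) := by
          intro k hk
          simp only [hyh, dif_pos hk]
          exact ⟨(Classical.choose (iInf_lt_iff.mp hk)).2,
            Classical.choose_spec (iInf_lt_iff.mp hk)⟩
        refine ⟨yh, ?_, ?_⟩
        · -- convergence to y
          rw [Metric.tendsto_atTop]
          intro ε hε
          obtain ⟨j, hj⟩ := exists_nat_one_div_lt hε
          refine ⟨max (K 0) (K j), fun k hk => ?_⟩
          have hk0 : K 0 ≤ k := le_trans (le_max_left _ _) hk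
          have hkj : K j ≤ k := le_trans (le_max_right _ _) hk
          have hMk : j ≤ M k := hjM j k hkj
          have hmem := (hyhspec k (hPholds k hk0)).1
          have hdist := hnnsub (M k) hmem
          rw [Metric.mem_ball] at hdist
          calc dist (yh k) y < 1 / (M k + 1) := hdist
            _ ≤ 1 / (j + 1) := by
                apply one_div_le_one_div_of_le (by positivity)
                exact_mod_cast Nat.succ_le_succ hMk
            _ < ε := hj
        · -- limsup inequality
          refine ge_of_tendsto hc_tendsto (Eventually.of_forall fun j => ?_)
          refine limsup_le_of_le ?_ ?_
          · isBoundedDefault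
          · filter_upwards [eventually_ge_atTop (max (K 0) (K j))] with k hk
            have hk0 : K 0 ≤ k := le_trans (le_max_left _ _) hk
            have hkj : K j ≤ k := le_trans (le_max_right _ _) hk
            have hMk : j ≤ M k := hjM j k hkj
            have hlt := (hyhspec k (hPholds k hk0)).2
            exact le_trans hlt.le (hc_anti.antitone hMk)
  · -- Y is empty
    refine ⟨id, strictMono_id, fun _ => 0, lowerSemicontinuous_const, ?_, ?_⟩
    · intro y; exact absurd ⟨y⟩ hY
    · intro y; exact absurd ⟨y⟩ hY
end

section
/- Let (X, 𝔪) be a measure space with 𝔪 finite, and let f_n, f be nonnegative measurable functions with f_n ↑ f 𝔪-a.e. and ∫ f d𝔪 < ∞. Then ∫ f_n·log f_n d𝔪 → ∫ f·log f d𝔪 (with the convention 0·log 0 = 0). -/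
open MeasureTheory Filter Topology ENNReal

/-- The (possibly infinite) entropy-type integral `∫ g log g dm`, defined in `EReal` as the
difference of the integrals of the positive and negative parts (convention `0 log 0 = 0`). -/
noncomputable def entInt {X : Type*} [MeasurableSpace X] (m : Measure X) (g : X → ℝ) : EReal :=
  ((∫⁻ x, ENNReal.ofReal (g x * Real.log (g x)) ∂m : ℝ≥0∞) : EReal)
    - ((∫⁻ x, ENNReal.ofReal (-(g x * Real.log (g x))) ∂m : ℝ≥0∞) : EReal)

/-- The positive part of `t log t` is monotone on `[0, ∞)`. -/
lemma ofReal_mul_log_mono {a b : ℝ} (ha : 0 ≤ a) (hab : a ≤ b) :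
    ENNReal.ofReal (a * Real.log a) ≤ ENNReal.ofReal (b * Real.log b) := by
  rcases le_or_gt b 1 with hb | hb
  · have h1 : a * Real.log a ≤ 0 :=
      mul_nonpos_of_nonneg_of_nonpos ha (Real.log_nonpos ha (hab.trans hb))
    have h2 : b * Real.log b ≤ 0 :=
      mul_nonpos_of_nonneg_of_nonpos (ha.trans hab) (Real.log_nonpos (ha.trans hab) hb)
    simp [ENNReal.ofReal_eq_zero.2 h1, ENNReal.ofReal_eq_zero.2 h2]
  · rcases le_or_gt a 1 with ha1 | ha1
    · have h1 : a * Real.log a ≤ 0 :=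
        mul_nonpos_of_nonneg_of_nonpos ha (Real.log_nonpos ha ha1)
      calc ENNReal.ofReal (a * Real.log a) = 0 := ENNReal.ofReal_eq_zero.2 h1
        _ ≤ _ := zero_le
    · apply ENNReal.ofReal_le_ofReal
      have hla : 0 ≤ Real.log a := Real.log_nonneg ha1.le
      exact mul_le_mul hab (Real.log_le_log (by linarith) hab) hla (by linarith)

/-- `-(t log t) ≤ 1/e` for `t ≥ 0`. -/
lemma neg_mul_log_le {t : ℝ} (ht : 0 ≤ t) : -(t * Real.log t) ≤ (Real.exp 1)⁻¹ := by
  rcases eq_or_lt_of_le ht with h | h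
  · simp [← h]; positivity
  · have he : (0:ℝ) < Real.exp 1 := Real.exp_pos 1
    have hx : (0:ℝ) < (Real.exp 1 * t)⁻¹ := by positivity
    have := Real.log_le_sub_one_of_pos hx
    rw [Real.log_inv, Real.log_mul (ne_of_gt he) (ne_of_gt h), Real.log_exp] at this
    -- this : -(1 + log t) ≤ (e*t)⁻¹ - 1
    have h2 : -Real.log t ≤ (Real.exp 1 * t)⁻¹ := by linarith
    have h3 : t * -Real.log t ≤ t * (Real.exp 1 * t)⁻¹ :=
      mul_le_mul_of_nonneg_left h2 ht
    calc -(t * Real.log t) = t * -Real.log t := by ring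
      _ ≤ t * (Real.exp 1 * t)⁻¹ := h3
      _ = (Real.exp 1)⁻¹ := by field_simp

/-- Monotone convergence of the entropy: if `m` is finite, `f_n ↑ g` `m`-a.e. with
`f_n, g ≥ 0` and `∫ g dm < ∞`, then `∫ f_n log f_n dm → ∫ g log g dm`. -/
theorem stmt5 {X : Type*} [MeasurableSpace X] (m : Measure X) [IsFiniteMeasure m]
    (f : ℕ → X → ℝ) (g : X → ℝ)
    (hmeas : ∀ n, Measurable (f n)) (hgmeas : Measurable g)
    (hnonneg : ∀ n x, 0 ≤ f n x) (hgnonneg : ∀ x, 0 ≤ g x)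
    (hmono : ∀ᵐ x ∂m, Monotone fun n => f n x)
    (hlim : ∀ᵐ x ∂m, Tendsto (fun n => f n x) atTop (𝓝 (g x)))
    (hint : ∫⁻ x, ENNReal.ofReal (g x) ∂m < ⊤) :
    Tendsto (fun n => entInt m (f n)) atTop (𝓝 (entInt m g)) := by
  set A : ℕ → ℝ≥0∞ := fun n => ∫⁻ x, ENNReal.ofReal (f n x * Real.log (f n x)) ∂m with hA_def
  set B : ℕ → ℝ≥0∞ := fun n => ∫⁻ x, ENNReal.ofReal (-(f n x * Real.log (f n x))) ∂m with hB_def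
  set Ag : ℝ≥0∞ := ∫⁻ x, ENNReal.ofReal (g x * Real.log (g x)) ∂m with hAg_def
  set Bg : ℝ≥0∞ := ∫⁻ x, ENNReal.ofReal (-(g x * Real.log (g x))) ∂m with hBg_def
  have hcont : Continuous fun t : ℝ => ENNReal.ofReal (t * Real.log t) :=
    ENNReal.continuous_ofReal.comp Real.continuous_mul_log
  have hcontn : Continuous fun t : ℝ => ENNReal.ofReal (-(t * Real.log t)) :=
    ENNReal.continuous_ofReal.comp Real.continuous_mul_log.neg
  -- positive part: monotone convergence
  have hA : Tendsto A atTop (𝓝 Ag) := by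
    apply lintegral_tendsto_of_tendsto_of_monotone
    · intro n
      exact (((hmeas n).mul (Real.measurable_log.comp (hmeas n))).ennreal_ofReal).aemeasurable
    · filter_upwards [hmono] with x hx
      intro i j hij
      exact ofReal_mul_log_mono (hnonneg i x) (hx hij)
    · filter_upwards [hlim] with x hx
      exact (hcont.tendsto (g x)).comp hx
  -- negative part: dominated convergence
  have hbound_int : ∫⁻ _ : X, ENNReal.ofReal (Real.exp 1)⁻¹ ∂m ≠ ⊤ := by
    rw [lintegral_const]
    exact ENNReal.mul_ne_top ENNReal.ofReal_ne_top (measure_ne_top m _)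
  have hB : Tendsto B atTop (𝓝 Bg) := by
    apply tendsto_lintegral_of_dominated_convergence (fun _ => ENNReal.ofReal (Real.exp 1)⁻¹)
    · intro n
      exact (((hmeas n).mul (Real.measurable_log.comp (hmeas n))).neg).ennreal_ofReal
    · intro n
      filter_upwards with x
      exact ENNReal.ofReal_le_ofReal (neg_mul_log_le (hnonneg n x))
    · exact hbound_int
    · filter_upwards [hlim] with x hx
      exact (hcontn.tendsto (g x)).comp hx
  -- Bg is finite
  have hBg_fin : Bg ≠ ⊤ := by
    refine ne_top_of_le_ne_top hbound_int (lintegral_mono fun x => ?_)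
    exact ENNReal.ofReal_le_ofReal (neg_mul_log_le (hgnonneg x))
  -- pass to EReal
  have hAe : Tendsto (fun n => (A n : EReal)) atTop (𝓝 (Ag : EReal)) :=
    EReal.tendsto_coe_ennreal.2 hA
  have hBe : Tendsto (fun n => (-(B n : EReal))) atTop (𝓝 (-(Bg : EReal))) :=
    (EReal.tendsto_coe_ennreal.2 hB).neg
  have hct : ContinuousAt (fun p : EReal × EReal => p.1 + p.2) ((Ag : EReal), -(Bg : EReal)) := by
    apply EReal.continuousAt_add
    · right
      simp only [ne_eq, EReal.neg_eq_bot_iff]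
      exact fun h => hBg_fin (by rwa [← EReal.coe_ennreal_top, EReal.coe_ennreal_eq_coe_ennreal_iff] at h)
    · left
      exact EReal.coe_ennreal_ne_bot _
  have := hct.tendsto.comp (hAe.prodMk_nhds hBe)
  have heq : ∀ n, entInt m (f n) = (A n : EReal) + (-(B n : EReal)) := fun n => by
    rw [entInt, sub_eq_add_neg]
  have heqg : entInt m g = (Ag : EReal) + (-(Bg : EReal)) := by
    rw [entInt, sub_eq_add_neg]
  simp only [heq, heqg]
  exact this
end

section
/- Let π be an optimal geodesic plan between μ₀ and μ₁ supported on a cyclically monotone set Γ ⊂ Geo(X), fix t ∈ (0,1), a bounded set L ⊂ X, and fix γ̄ ∈ Γ with γ̄_t ∈ L. Then for every γ ∈ Γ with γ_t ∈ L one has d²(γ₀,γ₁) ≤ ((1−t)² + t²)d²(γ₀,γ₁) + 2(diam L + ℓ(γ̄))d(γ₀,γ₁) + 2(diam L + ℓ(γ̄))², and consequently the length ℓ(γ) = d(γ₀,γ₁) admits an upper bound depending only on diam L, ℓ(γ̄), and t. -/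
open Set Metric

/-- `γ : ℝ → X` is a constant-speed geodesic parametrized on `[0,1]`. -/
def IsGeodesic {X : Type*} [MetricSpace X] (γ : ℝ → X) : Prop :=
  ∀ s ∈ Icc (0:ℝ) 1, ∀ r ∈ Icc (0:ℝ) 1, dist (γ s) (γ r) = |s - r| * dist (γ 0) (γ 1)

/-- A set of curves `Γ` is cyclically monotone (for the quadratic cost between the
endpoints of its curves). -/
def CyclicallyMonotone {X : Type*} [MetricSpace X] (Γ : Set (ℝ → X)) : Prop :=
  ∀ n : ℕ, ∀ σ : Fin (n + 1) → ℝ → X, (∀ i, σ i ∈ Γ) →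
    ∑ i : Fin (n + 1), dist (σ i 0) (σ i 1) ^ 2 ≤
      ∑ i : Fin (n + 1), dist (σ i 0) (σ (i + 1) 1) ^ 2

/-- Localization in transport distance: if `Γ` is a cyclically monotone set of geodesics,
`t ∈ (0,1)`, `L` is bounded and `γ̄ ∈ Γ` passes through `L` at time `t`, then every
`γ ∈ Γ` with `γ_t ∈ L` satisfies
`d²(γ₀,γ₁) ≤ ((1−t)²+t²) d²(γ₀,γ₁) + 2(diam L + ℓ(γ̄)) d(γ₀,γ₁) + 2(diam L + ℓ(γ̄))²`,
and consequently the lengths `ℓ(γ) = d(γ₀,γ₁)` of such curves are uniformly bounded. -/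
theorem stmt12 {X : Type*} [MetricSpace X]
    (Γ : Set (ℝ → X)) (hgeo : ∀ γ ∈ Γ, IsGeodesic γ) (hcm : CyclicallyMonotone Γ)
    (t : ℝ) (ht : t ∈ Ioo (0:ℝ) 1)
    (L : Set X) (hL : Bornology.IsBounded L)
    (γb : ℝ → X) (hγb : γb ∈ Γ) (hγbt : γb t ∈ L) :
    (∀ γ ∈ Γ, γ t ∈ L →
      dist (γ 0) (γ 1) ^ 2 ≤ ((1 - t) ^ 2 + t ^ 2) * dist (γ 0) (γ 1) ^ 2
        + 2 * (diam L + dist (γb 0) (γb 1)) * dist (γ 0) (γ 1)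
        + 2 * (diam L + dist (γb 0) (γb 1)) ^ 2) ∧
    ∃ B : ℝ, ∀ γ ∈ Γ, γ t ∈ L → dist (γ 0) (γ 1) ≤ B := by
  obtain ⟨ht0, ht1⟩ := ht
  set D := diam L + dist (γb 0) (γb 1) with hD
  have hDnn : 0 ≤ D := add_nonneg diam_nonneg dist_nonneg
  have htmem : t ∈ Icc (0:ℝ) 1 := ⟨ht0.le, ht1.le⟩
  have h0mem : (0:ℝ) ∈ Icc (0:ℝ) 1 := ⟨le_refl _, zero_le_one⟩
  have h1mem : (1:ℝ) ∈ Icc (0:ℝ) 1 := ⟨zero_le_one, le_refl _⟩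
  have key : ∀ γ ∈ Γ, γ t ∈ L →
      dist (γ 0) (γ 1) ^ 2 ≤ ((1 - t) ^ 2 + t ^ 2) * dist (γ 0) (γ 1) ^ 2
        + 2 * D * dist (γ 0) (γ 1) + 2 * D ^ 2 := by
    intro γ hγ hγt
    have hg := hgeo γ hγ
    have hgb := hgeo γb hγb
    set ℓ := dist (γ 0) (γ 1) with hℓ
    set ℓb := dist (γb 0) (γb 1) with hℓb
    have hℓnn : 0 ≤ ℓ := dist_nonneg
    have hℓbnn : 0 ≤ ℓb := dist_nonneg
    have hdL : dist (γb t) (γ t) ≤ diam L := dist_le_diam_of_mem hL hγbt hγt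
    have hdL' : dist (γ t) (γb t) ≤ diam L := dist_le_diam_of_mem hL hγt hγbt
    have e1 : dist (γb 0) (γb t) = t * ℓb := by
      rw [hgb 0 h0mem t htmem]
      rw [abs_of_nonpos (by linarith)]
      ring_nf
      rw [hℓb]
    have e2 : dist (γ t) (γ 1) = (1 - t) * ℓ := by
      rw [hg t htmem 1 h1mem]
      rw [abs_of_nonpos (by linarith)]
      ring_nf
      rw [hℓ]
    have e3 : dist (γ 0) (γ t) = t * ℓ := by
      rw [hg 0 h0mem t htmem]
      rw [abs_of_nonpos (by linarith)]
      ring_nf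
      rw [hℓ]
    have e4 : dist (γb t) (γb 1) = (1 - t) * ℓb := by
      rw [hgb t htmem 1 h1mem]
      rw [abs_of_nonpos (by linarith)]
      ring_nf
      rw [hℓb]
    have h1 : dist (γb 0) (γ 1) ≤ D + (1 - t) * ℓ := by
      calc dist (γb 0) (γ 1) ≤ dist (γb 0) (γb t) + dist (γb t) (γ t) + dist (γ t) (γ 1) :=
            dist_triangle4 _ _ _ _
        _ ≤ t * ℓb + diam L + (1 - t) * ℓ := by rw [e1, e2]; linarith
        _ ≤ D + (1 - t) * ℓ := by
            rw [hD]
            nlinarith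
    have h2 : dist (γ 0) (γb 1) ≤ D + t * ℓ := by
      calc dist (γ 0) (γb 1) ≤ dist (γ 0) (γ t) + dist (γ t) (γb t) + dist (γb t) (γb 1) :=
            dist_triangle4 _ _ _ _
        _ ≤ t * ℓ + diam L + (1 - t) * ℓb := by rw [e3, e4]; linarith
        _ ≤ D + t * ℓ := by rw [hD]; nlinarith
    have hcm2 := hcm 1 ![γb, γ] (by
      intro i
      fin_cases i <;> simpa)
    have hexp : ℓb ^ 2 + ℓ ^ 2 ≤ dist (γb 0) (γ 1) ^ 2 + dist (γ 0) (γb 1) ^ 2 := by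
      have := hcm2
      simp [Fin.sum_univ_succ, Fin.sum_univ_zero] at this
      convert this using 2 <;> norm_num
    have sq1 : dist (γb 0) (γ 1) ^ 2 ≤ (D + (1 - t) * ℓ) ^ 2 := by
      apply pow_le_pow_left₀ dist_nonneg h1
    have sq2 : dist (γ 0) (γb 1) ^ 2 ≤ (D + t * ℓ) ^ 2 := by
      apply pow_le_pow_left₀ dist_nonneg h2
    nlinarith [sq_nonneg ℓb]
  refine ⟨key, ?_⟩
  have hc : 0 < t * (1 - t) := mul_pos ht0 (by linarith)
  refine ⟨2 * D / (t * (1 - t)), ?_⟩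
  intro γ hγ hγt
  have hk := key γ hγ hγt
  have hℓnn : (0:ℝ) ≤ dist (γ 0) (γ 1) := dist_nonneg
  have hq : t * (1 - t) * dist (γ 0) (γ 1) ^ 2 ≤ D * dist (γ 0) (γ 1) + D ^ 2 := by
    nlinarith
  have hc4 : t * (1 - t) ≤ 1 / 4 := by nlinarith [sq_nonneg (t - 1/2)]
  rw [le_div_iff₀ hc]
  nlinarith [mul_le_mul_of_nonneg_left hq hc.le, sq_nonneg (t * (1 - t) * dist (γ 0) (γ 1) - 2 * D),
    mul_nonneg hDnn hℓnn, mul_nonneg hc.le hℓnn]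
end
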